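/- Let f be a monic real polynomial of degree n ≥ 1 satisfying Assumption 1, with even/odd splitting f = p − q, and let α > 0 be a simple real root of f with f'(α) < 0 (equivalently q'(α) > p'(α)). Then there exist δ > 0 and ℓ ∈ [0, 1) such that for every x₀ with α − δ < x₀ < α, the sequence defined by x_{t+1} = x_t · p(x_t)/q(x_t) satisfies 0 ≤ α − x_{t+1} ≤ ℓ · (α − x_t) for all t ≥ 0; in particular x_t converges to α at a linear rate. -/

import Mathlib

open Filter


lemma aux_pos (P : Polynomial ℝ) (hlc : 0 < P.leadingCoeff)
    (hroots : ∀ r : ℝ, P.eval r = 0 → r ≤ 0) {a : ℝ} (ha : 0 < a) : 0 < P.eval a := by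
  by_contra hle
  push_neg at hle
  have hne : P.eval a ≠ 0 := fun h0 => absurd (hroots a h0) (not_le.2 ha)
  have hlt : P.eval a < 0 := lt_of_le_of_ne hle hne
  have hdeg : 0 < P.degree := by
    rcases lt_or_ge 0 P.degree with h | h
    · exact h
    · have hC := Polynomial.eq_C_of_degree_le_zero h
      rw [hC, Polynomial.eval_C] at hlt
      rw [hC, Polynomial.leadingCoeff_C] at hlc
      linarith
  have htop := Polynomial.tendsto_atTop_of_leadingCoeff_nonneg P hdeg hlc.le
  obtain ⟨b, hb1, hba⟩ := ((htop.eventually_ge_atTop 1).and (eventually_ge_atTop a)).exists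
  have h0mem : (0:ℝ) ∈ Set.Icc (P.eval a) (P.eval b) := ⟨hlt.le, by linarith⟩
  obtain ⟨r, hr, hr0⟩ := intermediate_value_Icc hba (P.continuous_aeval).continuousOn h0mem
  have : r ≤ 0 := hroots r (by simpa using hr0)
  linarith [hr.1]

lemma aux_prod (a : ℝ) (ha : 0 ≤ a) : ∀ (s : Multiset ℂ),
    (∀ z ∈ s, Complex.normSq ((a:ℂ) - z) ≠ 0 ∧ 0 ≤ z.re) →
    0 < (s.map fun z => Complex.normSq ((a:ℂ) - z)).prod ∧
    (s.map fun z => Complex.normSq ((a:ℂ) - z)).prod ≤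
      (s.map fun z => Complex.normSq ((a:ℂ) + z)).prod := by
  intro s
  induction s using Multiset.induction with
  | empty => intro _; simp
  | cons z s ih =>
    intro h
    have hz := h z (Multiset.mem_cons_self z s)
    have hs := ih (fun y hy => h y (Multiset.mem_cons_of_mem hy))
    have hzpos : 0 < Complex.normSq ((a:ℂ) - z) :=
      lt_of_le_of_ne (Complex.normSq_nonneg _) (Ne.symm hz.1)
    have hzle : Complex.normSq ((a:ℂ) - z) ≤ Complex.normSq ((a:ℂ) + z) := by
      simp only [Complex.normSq_apply, Complex.sub_re, Complex.sub_im, Complex.add_re,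
        Complex.add_im, Complex.ofReal_re, Complex.ofReal_im]
      nlinarith [mul_nonneg ha hz.2]
    simp only [Multiset.map_cons, Multiset.prod_cons]
    constructor
    · exact mul_pos hzpos hs.1
    · exact mul_le_mul hzle hs.2 hs.1.le (le_trans hzpos.le hzle)

lemma aux_sq_lt (h : Polynomial ℝ) (hm : h.Monic)
    (hroots : ∀ z : ℂ, Polynomial.aeval z h = 0 → 0 ≤ z.re)
    {w : ℂ} (hw : Polynomial.aeval w h = 0) (hwre : 0 < w.re)
    {a : ℝ} (ha : 0 < a) (hna : h.eval a ≠ 0) :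
    (h.eval a)^2 < (h.eval (-a))^2 := by
  set F := h.map (algebraMap ℝ ℂ) with hF
  have hFm : F.Monic := hm.map _
  have hFne : F ≠ 0 := hFm.ne_zero
  have hFeval : ∀ c : ℝ, F.eval (c:ℂ) = ((h.eval c : ℝ) : ℂ) := by
    intro c
    rw [hF, Polynomial.eval_map, ← Polynomial.aeval_def]
    exact_mod_cast Polynomial.aeval_algebraMap_apply ℂ c h
  have haev : ∀ z : ℂ, Polynomial.aeval z h = F.eval z := by
    intro z; rw [hF, Polynomial.eval_map, ← Polynomial.aeval_def]
  have hFeq := (IsAlgClosed.splits F).eq_prod_roots_of_monic hFm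
  have hprod : ∀ c : ℂ, F.eval c = (F.roots.map fun z => c - z).prod := by
    intro c
    conv_lhs => rw [hFeq]
    rw [Polynomial.eval_multiset_prod, Multiset.map_map]
    congr 1
    apply Multiset.map_congr rfl
    intro z _; simp
  have hnormSq : ∀ c : ℝ, (h.eval c)^2 =
      (F.roots.map fun z => Complex.normSq ((c:ℂ) - z)).prod := by
    intro c
    have h1 : Complex.normSq (F.eval (c:ℂ)) = (h.eval c)^2 := by
      rw [hFeval c, Complex.normSq_ofReal]; ring
    rw [← h1, hprod c]
    rw [← Multiset.prod_hom _ Complex.normSq, Multiset.map_map]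
    rfl
  have hrootmem : ∀ z ∈ F.roots, Complex.normSq ((a:ℂ) - z) ≠ 0 ∧ 0 ≤ z.re := by
    intro z hz
    have hz0 : Polynomial.aeval z h = 0 := by
      rw [haev]; exact (Polynomial.mem_roots hFne).mp hz
    constructor
    · intro h0
      have : (a:ℂ) - z = 0 := by
        exact (Complex.normSq_eq_zero).mp h0
      have hza : z = (a:ℂ) := by linear_combination -this
      apply hna
      have := hFeval a
      rw [hprod] at this
      apply_fun (Polynomial.eval z) at hFeq
      have : F.eval (a:ℂ) = 0 := by
        rw [← hza, ← haev, hz0]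
      rw [hFeval a] at this
      exact_mod_cast this
    · exact hroots z hz0
  have hwmem : w ∈ F.roots := (Polynomial.mem_roots hFne).mpr (by rw [Polynomial.IsRoot, ← haev, hw])
  set s := F.roots.erase w with hs
  have hcons : w ::ₘ s = F.roots := Multiset.cons_erase hwmem
  have hsmem : ∀ z ∈ s, Complex.normSq ((a:ℂ) - z) ≠ 0 ∧ 0 ≤ z.re := by
    intro z hz; exact hrootmem z (by rw [← hcons]; exact Multiset.mem_cons_of_mem hz)
  obtain ⟨hs_pos, hs_le⟩ := aux_prod a ha.le s hsmem
  have hwfac : Complex.normSq ((a:ℂ) - w) < Complex.normSq ((a:ℂ) + w) := by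
    simp only [Complex.normSq_apply, Complex.sub_re, Complex.sub_im, Complex.add_re,
      Complex.add_im, Complex.ofReal_re, Complex.ofReal_im]
    nlinarith [mul_pos ha hwre]
  have hwpos : 0 < Complex.normSq ((a:ℂ) - w) :=
    lt_of_le_of_ne (Complex.normSq_nonneg _) (Ne.symm (hrootmem w hwmem).1)
  have key : ((-a:ℝ) : ℂ) = -(a:ℂ) := by push_cast; ring
  have hRHS : (h.eval (-a))^2 = (F.roots.map fun z => Complex.normSq ((a:ℂ) + z)).prod := by
    rw [hnormSq (-a)]
    congr 1
    apply Multiset.map_congr rfl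
    intro z _
    rw [key]
    have : -(a:ℂ) - z = -((a:ℂ) + z) := by ring
    rw [this, Complex.normSq_neg]
  rw [hnormSq a, hRHS, ← hcons]
  simp only [Multiset.map_cons, Multiset.prod_cons]
  calc Complex.normSq ((a:ℂ) - w) * (s.map fun z => Complex.normSq ((a:ℂ) - z)).prod
      ≤ Complex.normSq ((a:ℂ) - w) * (s.map fun z => Complex.normSq ((a:ℂ) + z)).prod :=
        mul_le_mul_of_nonneg_left hs_le hwpos.le
    _ < Complex.normSq ((a:ℂ) + w) * (s.map fun z => Complex.normSq ((a:ℂ) + z)).prod :=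
        mul_lt_mul_of_pos_right hwfac (lt_of_lt_of_le hs_pos hs_le)

lemma aux_aeval_real (f : Polynomial ℝ) (r : ℝ) :
    Polynomial.aeval (r : ℂ) f = ((f.eval r : ℝ) : ℂ) := by
  rw [show ((r:ℝ):ℂ) = algebraMap ℝ ℂ r from rfl, Polynomial.aeval_algebraMap_apply]
  simp

theorem stmt11 (f : Polynomial ℝ) (n : ℕ) (hn : 1 ≤ n)
    (hmonic : f.Monic) (hdeg : f.natDegree = n)
    (has1 : ∀ z : ℂ, (Polynomial.aeval z) f = 0 → 0 ≤ z.re)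
    (has2 : ∃ z : ℂ, (Polynomial.aeval z) f = 0 ∧ 0 < z.re)
    (p q : ℝ → ℝ)
    (hp : ∀ x : ℝ, p x =
      ∑ j ∈ Finset.range (n + 1), if (n + j) % 2 = 0 then f.coeff j * x ^ j else 0)
    (hq : ∀ x : ℝ, q x =
      ∑ j ∈ Finset.range (n + 1), if (n + j) % 2 = 1 then -(f.coeff j) * x ^ j else 0)
    (α : ℝ) (hα : 0 < α) (hroot : f.IsRoot α)
    (hderiv : (Polynomial.derivative f).eval α < 0) :
    ∃ δ > (0 : ℝ), ∃ ℓ : ℝ, 0 ≤ ℓ ∧ ℓ < 1 ∧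
      ∀ x₀ : ℝ, α - δ < x₀ → x₀ < α →
        ∀ x : ℕ → ℝ, x 0 = x₀ →
          (∀ t : ℕ, x (t + 1) = x t * p (x t) / q (x t)) →
          (∀ t : ℕ, 0 ≤ α - x (t + 1) ∧ α - x (t + 1) ≤ ℓ * (α - x t)) ∧
            Tendsto x atTop (nhds α) := by
  classical
  set m : ℝ := (-1)^n with hm
  have hfα : f.eval α = 0 := hroot
  have hfe : ∀ y : ℝ, f.eval y = ∑ j ∈ Finset.range (n+1), f.coeff j * y^j := by
    intro y; rw [Polynomial.eval_eq_sum_range, hdeg]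
  have hp2 : ∀ x : ℝ, p x = (m * f.eval (-x) + f.eval x)/2 := by
    intro x
    rw [hp x, hfe, hfe, Finset.mul_sum, ← Finset.sum_add_distrib, Finset.sum_div]
    apply Finset.sum_congr rfl
    intro j _
    have hxp : (-x)^j = (-1:ℝ)^j * x^j := by rw [neg_pow]
    rcases Nat.even_or_odd (n+j) with he | ho
    · have h2 : (n+j) % 2 = 0 := Nat.even_iff.mp he
      have hmm : m * (-1:ℝ)^j = 1 := by rw [hm, ← pow_add]; exact Even.neg_one_pow he
      simp only [h2, if_true]
      rw [hxp]
      linear_combination (-(f.coeff j * x^j) / 2) * hmm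
    · have h2 : (n+j) % 2 = 1 := Nat.odd_iff.mp ho
      have hmm : m * (-1:ℝ)^j = -1 := by rw [hm, ← pow_add]; exact Odd.neg_one_pow ho
      simp only [show ¬((n+j)%2 = 0) by omega, if_false]
      rw [hxp]
      linear_combination (-(f.coeff j * x^j) / 2) * hmm
  have hq2 : ∀ x : ℝ, q x = (m * f.eval (-x) - f.eval x)/2 := by
    intro x
    rw [hq x, hfe, hfe, Finset.mul_sum, ← Finset.sum_sub_distrib, Finset.sum_div]
    apply Finset.sum_congr rfl
    intro j _
    have hxp : (-x)^j = (-1:ℝ)^j * x^j := by rw [neg_pow]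
    rcases Nat.even_or_odd (n+j) with he | ho
    · have h2 : (n+j) % 2 = 0 := Nat.even_iff.mp he
      have hmm : m * (-1:ℝ)^j = 1 := by rw [hm, ← pow_add]; exact Even.neg_one_pow he
      simp only [show ¬((n+j)%2 = 1) by omega, if_false]
      rw [hxp]
      linear_combination (-(f.coeff j * x^j) / 2) * hmm
    · have h2 : (n+j) % 2 = 1 := Nat.odd_iff.mp ho
      have hmm : m * (-1:ℝ)^j = -1 := by rw [hm, ← pow_add]; exact Odd.neg_one_pow ho
      simp only [h2, if_true]
      rw [hxp]
      linear_combination (-(f.coeff j * x^j) / 2) * hmm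
  -- the quotient polynomial g with f = (X - C α) * g
  set g : Polynomial ℝ := f /ₘ (Polynomial.X - Polynomial.C α) with hgdef
  have hfg : (Polynomial.X - Polynomial.C α) * g = f :=
    Polynomial.mul_divByMonic_eq_iff_isRoot.mpr hroot
  have hgm : g.Monic := by
    apply (Polynomial.monic_X_sub_C α).of_mul_monic_left
    rw [hfg]; exact hmonic
  have hgdeg : g.natDegree = n - 1 := by
    rw [hgdef, Polynomial.natDegree_divByMonic f (Polynomial.monic_X_sub_C α),
      Polynomial.natDegree_X_sub_C, hdeg]
  have hfd : (Polynomial.derivative f).eval α = g.eval α := by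
    conv_lhs => rw [← hfg]
    rw [Polynomial.derivative_mul]
    simp
  have hgα : g.eval α < 0 := by rw [← hfd]; exact hderiv
  have hgroots : ∀ z : ℂ, Polynomial.aeval z g = 0 → 0 ≤ z.re := by
    intro z hz
    apply has1
    rw [← hfg, map_mul, hz, mul_zero]
  have hfeval : ∀ y : ℝ, f.eval y = (y - α) * g.eval y := by
    intro y; rw [← hfg]; simp
  -- positivity of (-1)^(n-1) * g.eval (-α)
  have hHpos : 0 < (-1:ℝ)^(n-1) * g.eval (-α) := by
    have hP : ∀ y : ℝ,
        (Polynomial.C ((-1:ℝ)^(n-1)) * g.comp (-Polynomial.X)).eval y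
          = (-1:ℝ)^(n-1) * g.eval (-y) := by
      intro y; simp [Polynomial.eval_comp]
    have hlc : 0 < (Polynomial.C ((-1:ℝ)^(n-1)) * g.comp (-Polynomial.X)).leadingCoeff := by
      rw [Polynomial.leadingCoeff_mul, Polynomial.leadingCoeff_C,
        Polynomial.leadingCoeff_comp (by simp : (-Polynomial.X : Polynomial ℝ).natDegree ≠ 0)]
      rw [hgm.leadingCoeff, hgdeg]
      have : (-Polynomial.X : Polynomial ℝ).leadingCoeff = -1 := by
        rw [Polynomial.leadingCoeff_neg, Polynomial.leadingCoeff_X]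
      rw [this, one_mul, ← pow_add]
      have : Even ((n-1) + (n-1)) := by exact Even.add_self (n-1)
      rw [this.neg_one_pow]
      norm_num
    have hrts : ∀ r : ℝ, (Polynomial.C ((-1:ℝ)^(n-1)) * g.comp (-Polynomial.X)).eval r = 0
        → r ≤ 0 := by
      intro r hr
      rw [hP r] at hr
      have hgr : g.eval (-r) = 0 := by
        rcases mul_eq_zero.mp hr with h | h
        · exact absurd h (by positivity)
        · exact h
      have hfr : f.eval (-r) = 0 := by rw [hfeval, hgr, mul_zero]
      have := has1 ((-r : ℝ) : ℂ) (by rw [aux_aeval_real, hfr]; simp)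
      simpa using this
    have := aux_pos _ hlc hrts hα
    rwa [hP α] at this
  have hqα : q α = α * ((-1:ℝ)^(n-1) * g.eval (-α)) := by
    have hfneg : f.eval (-α) = -2*α*g.eval (-α) := by rw [hfeval]; ring
    have hm1 : m = -(-1:ℝ)^(n-1) := by
      rw [hm]
      conv_lhs => rw [show n = (n-1)+1 by omega]
      rw [pow_succ]; ring
    rw [hq2 α, hfneg, hfα, hm1]; ring
  have hqαpos : 0 < q α := by rw [hqα]; exact mul_pos hα hHpos
  have hqαne : q α ≠ 0 := ne_of_gt hqαpos
  -- the key inequality q α + α f'(α) > 0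
  have hB : 0 < q α + α * (Polynomial.derivative f).eval α := by
    rw [hqα, hfd]
    have key : 0 < (-1:ℝ)^(n-1) * g.eval (-α) + g.eval α := by
      by_cases hex : ∃ w : ℂ, Polynomial.aeval w g = 0 ∧ 0 < w.re
      · obtain ⟨w, hw, hwre⟩ := hex
        have hsq := aux_sq_lt g hgm hgroots hw hwre hα (ne_of_lt hgα)
        have hsgn : ((-1:ℝ)^(n-1) * g.eval (-α))^2 = (g.eval (-α))^2 := by
          rw [mul_pow, ← pow_mul]
          have : Even ((n-1) * 2) := ⟨n-1, by ring⟩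
          rw [this.neg_one_pow, one_mul]
        nlinarith [hHpos, hgα, hsq, hsgn]
      · push_neg at hex
        have hrts : ∀ r : ℝ, g.eval r = 0 → r ≤ 0 := by
          intro r hr
          have h1 : Polynomial.aeval (r : ℂ) g = 0 := by rw [aux_aeval_real, hr]; simp
          have h2 := hex (r:ℂ) h1
          simpa using h2
        have := aux_pos g (by rw [hgm.leadingCoeff]; norm_num) hrts hα
        linarith
    nlinarith [mul_pos hα key]
  -- analysis of the iteration map G
  have hnegD : ∀ y : ℝ, HasDerivAt (fun z : ℝ => f.eval (-z))
      ((Polynomial.derivative f).eval (-y) * (-1)) y := by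
    intro y
    have := HasDerivAt.comp y (f.hasDerivAt (-y)) (hasDerivAt_neg y)
    exact this
  set pe : ℝ → ℝ := fun y => (m * f.eval (-y) + f.eval y)/2 with hpe
  set qe : ℝ → ℝ := fun y => (m * f.eval (-y) - f.eval y)/2 with hqe
  set G : ℝ → ℝ := fun y => y * pe y / qe y with hG
  have hqeα : qe α = q α := by rw [hqe]; exact (hq2 α).symm
  have hpeα : pe α = q α := by
    have h1 : pe α - qe α = f.eval α := by rw [hpe, hqe]; ring
    rw [hfα] at h1
    rw [← hqeα]; linarith
  have hqeαne : qe α ≠ 0 := by rw [hqeα]; exact hqαne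
  set dpe : ℝ := (m * ((Polynomial.derivative f).eval (-α) * (-1))
    + (Polynomial.derivative f).eval α)/2 with hdpe
  set dqe : ℝ := (m * ((Polynomial.derivative f).eval (-α) * (-1))
    - (Polynomial.derivative f).eval α)/2 with hdqe
  have hpeD : HasDerivAt pe dpe α := by
    rw [hpe, hdpe]
    exact ((HasDerivAt.const_mul m (hnegD α)).add (f.hasDerivAt α)).div_const 2
  have hqeD : HasDerivAt qe dqe α := by
    rw [hqe, hdqe]
    exact ((HasDerivAt.const_mul m (hnegD α)).sub (f.hasDerivAt α)).div_const 2
  have hNum : HasDerivAt (fun y => y * pe y) (1 * pe α + α * dpe) α :=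
    (hasDerivAt_id α).mul hpeD
  have hGD : HasDerivAt G (((1 * pe α + α * dpe) * qe α - (α * pe α) * dqe) / (qe α)^2) α := by
    rw [hG]
    exact hNum.div hqeD hqeαne
  set L : ℝ := 1 + α * (Polynomial.derivative f).eval α / q α with hLdef
  have hGL : HasDerivAt G L α := by
    have hdd : dpe = dqe + (Polynomial.derivative f).eval α := by rw [hdpe, hdqe]; ring
    have hEq : ((1 * pe α + α * dpe) * qe α - (α * pe α) * dqe) / (qe α)^2 = L := by
      rw [hpeα, hqeα, hdd, hLdef]
      field_simp
      ring
    rw [← hEq]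
    exact hGD
  have hLpos : 0 < L := by
    rw [hLdef]
    have h1 : 1 + α * (Polynomial.derivative f).eval α / q α
        = (q α + α * (Polynomial.derivative f).eval α)/ q α := by field_simp
    rw [h1]
    exact div_pos hB hqαpos
  have hLlt1 : L < 1 := by
    rw [hLdef]
    have : α * (Polynomial.derivative f).eval α / q α < 0 :=
      div_neg_of_neg_of_pos (mul_neg_of_pos_of_neg hα hderiv) hqαpos
    linarith
  have hGα : G α = α := by
    rw [hG]
    show α * pe α / qe α = α
    rw [hpeα, hqeα, mul_div_assoc, div_self hqαne, mul_one]
  clear hLdef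
  clear_value L
  obtain ⟨ε, hε, hεL, hℓlt1⟩ : ∃ ε : ℝ, 0 < ε ∧ ε < L ∧ L + ε < 1 := by
    refine ⟨min L (1 - L) / 2, ?_, ?_, ?_⟩
    · have h3 := lt_min hLpos (show (0:ℝ) < 1 - L by linarith)
      linarith
    · have h1 := min_le_left L (1 - L)
      linarith
    · have h2 := min_le_right L (1 - L)
      linarith
  have hℓ0 : 0 ≤ L + ε := by linarith
  have hslope := hasDerivAt_iff_tendsto_slope.mp hGL
  rw [Metric.tendsto_nhdsWithin_nhds] at hslope
  obtain ⟨δ, hδpos, hδ⟩ := hslope ε hε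
  have hkey : ∀ y : ℝ, α - δ < y → y < α → 0 ≤ α - G y ∧ α - G y ≤ (L + ε) * (α - y) := by
    intro y h1 h2
    have hne : y ∈ ({α}ᶜ : Set ℝ) := by simp; exact ne_of_lt h2
    have hdist : dist y α < δ := by
      rw [Real.dist_eq, abs_of_neg (by linarith : y - α < 0)]; linarith
    have hd := hδ hne hdist
    rw [Real.dist_eq] at hd
    have habs := abs_lt.mp hd
    have hay : 0 < α - y := by linarith
    have hsl : slope G α y = (α - G y)/(α - y) := by
      rw [slope_def_field, hGα, show G y - α = -(α - G y) by ring,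
        show y - α = -(α - y) by ring, neg_div_neg_eq]
    have hval : α - G y = slope G α y * (α - y) := by
      rw [hsl]; field_simp
    constructor
    · rw [hval]
      apply mul_nonneg _ hay.le
      nlinarith [habs.1, hεL]
    · rw [hval]
      apply mul_le_mul_of_nonneg_right _ hay.le
      linarith [habs.2]
  refine ⟨δ, hδpos, L + ε, hℓ0, hℓlt1, ?_⟩
  intro x₀ hx₀l hx₀u x hx0 hrec
  have hGrec : ∀ t, x (t+1) = G (x t) := by
    intro t
    rw [hrec t, hp2 (x t), hq2 (x t)]
  have hinv : ∀ t, α - δ < x t ∧ x t ≤ α := by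
    intro t; induction t with
    | zero => rw [hx0]; exact ⟨hx₀l, hx₀u.le⟩
    | succ t ih =>
      rcases eq_or_lt_of_le ih.2 with heq | hlt
      · have hxt1 : x (t+1) = α := by rw [hGrec t, heq, hGα]
        rw [hxt1]
        exact ⟨by linarith, le_refl α⟩
      · have hk := hkey (x t) ih.1 hlt
        rw [← hGrec t] at hk
        constructor
        · have h3 : (L+ε)*(α - x t) < 1*(α - x t) :=
            mul_lt_mul_of_pos_right hℓlt1 (by linarith)
          linarith [hk.2, ih.1]
        · linarith [hk.1]
  have hbnd : ∀ t, 0 ≤ α - x (t+1) ∧ α - x (t+1) ≤ (L+ε)*(α - x t) := by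
    intro t
    rcases eq_or_lt_of_le (hinv t).2 with heq | hlt
    · have hxt1 : x (t+1) = α := by rw [hGrec t, heq, hGα]
      rw [hxt1, heq]
      norm_num
    · have hk := hkey (x t) (hinv t).1 hlt
      rw [← hGrec t] at hk
      exact hk
  refine ⟨hbnd, ?_⟩
  have hnn : ∀ t, 0 ≤ α - x t := by
    intro t; cases t with
    | zero => rw [hx0]; linarith
    | succ t => exact (hbnd t).1
  have hgeo : ∀ t, α - x t ≤ (L+ε)^t * (α - x 0) := by
    intro t; induction t with
    | zero => simp
    | succ t ih =>
      calc α - x (t+1) ≤ (L+ε)*(α - x t) := (hbnd t).2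
        _ ≤ (L+ε)*((L+ε)^t * (α - x 0)) := mul_le_mul_of_nonneg_left ih hℓ0
        _ = (L+ε)^(t+1) * (α - x 0) := by ring
  have htend : Tendsto (fun t : ℕ => α - x t) atTop (nhds 0) := by
    apply squeeze_zero hnn hgeo
    have h5 := (tendsto_pow_atTop_nhds_zero_of_lt_one hℓ0 hℓlt1).mul_const (α - x 0)
    rw [zero_mul] at h5
    exact h5
  have hfinal : Tendsto (fun t : ℕ => α - (α - x t)) atTop (nhds (α - 0)) :=
    tendsto_const_nhds.sub htend
  simp only [sub_sub_cancel, sub_zero] at hfinal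
  exact hfinal
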